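/- arXiv:math/0107068 — 2 statements merged into one kernel-verified Lean document; each statement's English description precedes it below -/
import Mathlib

section
/- Let {Z_n} be a supercritical Galton–Watson process with Z₀ = 1, offspring mean δ ∈ (1,∞), and extinction probability q(δ) < 1. Suppose there exists α > 0 with P(Z_r ≥ α δ^r for all r ≥ 0) ≥ (1 − q(δ))/2. Then for all integers 0 ≤ ℓ < k, P(Z_k < α δ^{k−ℓ} | Z_ℓ) ≤ ((1 + q(δ))/2)^{Z_ℓ} almost surely. -/
open MeasureTheory ProbabilityTheory

section Stmt9Aux

open Finset

namespace Stmt9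



/-- generic Galton–Watson functional on sequence space -/
def gw (x : ℕ × ℕ → ℕ) : ℕ → ℕ
  | 0 => 1
  | m + 1 => ∑ i ∈ Finset.range (gw x m), x (m, i)

/-- subtree sizes: `sub x ℓ m u` is the size of generation `m` of the subtree founded
by individual `u` of generation `ℓ`. -/
def sub (x : ℕ × ℕ → ℕ) (ℓ : ℕ) : ℕ → ℕ → ℕ
  | 0 => fun _ => 1
  | m + 1 => fun u => ∑ i ∈ Finset.range (sub x ℓ m u),
      x (ℓ + m, (∑ v ∈ Finset.range u, sub x ℓ m v) + i)

lemma measurable_nat_cases {Ω β : Type*} [MeasurableSpace Ω] [MeasurableSpace β]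
    [MeasurableSingletonClass β] [Countable β]
    {a : Ω → ℕ} {h : ℕ → Ω → β} (ha : Measurable a) (hh : ∀ n, Measurable (h n)) :
    Measurable (fun ω => h (a ω) ω) := by
  apply measurable_to_countable'
  intro y
  have : (fun ω => h (a ω) ω) ⁻¹' {y} = ⋃ n, (a ⁻¹' {n}) ∩ ((h n) ⁻¹' {y}) := by
    ext ω
    simp only [Set.mem_preimage, Set.mem_singleton_iff, Set.mem_iUnion, Set.mem_inter_iff]
    constructor
    · intro hy; exact ⟨a ω, rfl, hy⟩
    · rintro ⟨n, rfl, hy⟩; exact hy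
  rw [this]
  exact MeasurableSet.iUnion fun n => ((ha (measurableSet_singleton n))).inter
    ((hh n) (measurableSet_singleton y))

lemma measurable_sum_range {Ω : Type*} [MeasurableSpace Ω]
    {a : Ω → ℕ} {f : ℕ → Ω → ℕ} (ha : Measurable a) (hf : ∀ i, Measurable (f i)) :
    Measurable (fun ω => ∑ i ∈ Finset.range (a ω), f i ω) :=
  measurable_nat_cases (h := fun n ω => ∑ i ∈ Finset.range n, f i ω) ha
    (fun n => Finset.measurable_sum _ (fun i _ => hf i))

lemma measurable_gw (n : ℕ) : Measurable (fun x : ℕ × ℕ → ℕ => gw x n) := by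
  induction n with
  | zero => exact measurable_const
  | succ m ih =>
    exact measurable_sum_range ih (fun i => measurable_pi_apply (m, i))

lemma measurable_sub (ℓ : ℕ) : ∀ m u, Measurable (fun x : ℕ × ℕ → ℕ => sub x ℓ m u) := by
  intro m
  induction m with
  | zero => exact fun u => measurable_const
  | succ m ih =>
    intro u
    refine measurable_sum_range (ih u) (fun i => ?_)
    have hb : Measurable (fun x : ℕ × ℕ → ℕ => (∑ v ∈ Finset.range u, sub x ℓ m v) + i) :=
      (Finset.measurable_sum _ (fun v _ => ih v)).add measurable_const
    exact measurable_nat_cases (h := fun c (x : ℕ × ℕ → ℕ) => x (ℓ + m, c)) hb (fun c => measurable_pi_apply (ℓ + m, c))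

/-- `gw x n` only depends on rows `< n`. -/
lemma gw_congr {x x' : ℕ × ℕ → ℕ} {n : ℕ} (h : ∀ p : ℕ × ℕ, p.1 < n → x p = x' p) :
    gw x n = gw x' n := by
  induction n with
  | zero => rfl
  | succ m ih =>
    have hm : gw x m = gw x' m := ih (fun p hp => h p (hp.trans (Nat.lt_succ_self m)))
    simp only [gw, hm]
    exact Finset.sum_congr rfl (fun i _ => h (m, i) (Nat.lt_succ_self m))

/-- summing a function over a partition of `range` into blocks -/
lemma sum_blocks (f g : ℕ → ℕ) : ∀ j : ℕ,
    ∑ i ∈ Finset.range (∑ u ∈ Finset.range j, g u), f i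
      = ∑ u ∈ Finset.range j, ∑ i ∈ Finset.range (g u), f ((∑ v ∈ Finset.range u, g v) + i) := by
  intro j
  induction j with
  | zero => simp
  | succ j ih =>
    rw [Finset.sum_range_succ, Finset.sum_range_succ, ← ih]
    rw [Finset.sum_range_add]




variable {Ω : Type*} [MeasurableSpace Ω] {μ : Measure Ω} [IsProbabilityMeasure μ]
  {ξ : ℕ → ℕ → Ω → ℕ}

/-- the σ-algebra generated by the variables `ξ p` for `p ∈ A` -/
def grp (ξ : ℕ → ℕ → Ω → ℕ) (A : Set (ℕ × ℕ)) : MeasurableSpace Ω :=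
  ⨆ p ∈ A, MeasurableSpace.comap (fun ω => ξ p.1 p.2 ω) inferInstance

lemma le_grp {A : Set (ℕ × ℕ)} {p : ℕ × ℕ} (hp : p ∈ A) :
    MeasurableSpace.comap (fun ω => ξ p.1 p.2 ω) inferInstance ≤ grp ξ A := by
  unfold grp
  exact le_biSup (fun p : ℕ × ℕ => MeasurableSpace.comap (fun ω => ξ p.1 p.2 ω) inferInstance) hp

set_option maxHeartbeats 1000000 in
lemma indep_grp (hmeas : ∀ n i, Measurable (ξ n i))
    (hindep : iIndepFun (fun p : ℕ × ℕ => ξ p.1 p.2) μ)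
    {A B : Set (ℕ × ℕ)} (hAB : Disjoint A B) :
    Indep (grp ξ A) (grp ξ B) μ := by
  have hii := hindep.iIndep
  have h := ProbabilityTheory.indep_biSup_compl
    (s := fun p : ℕ × ℕ => MeasurableSpace.comap (fun ω => ξ p.1 p.2 ω) inferInstance)
    (fun p : ℕ × ℕ => (hmeas p.1 p.2).comap_le) hii A
  unfold grp
  refine indep_of_indep_of_le_right h ?_
  refine iSup₂_le fun p hp => ?_
  have hpA : p ∈ Aᶜ := fun hA => Set.disjoint_left.mp hAB hA hp
  exact le_biSup (fun p : ℕ × ℕ => MeasurableSpace.comap (fun ω => ξ p.1 p.2 ω) inferInstance) hpA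

lemma measurableSet_grp (hmeas : ∀ n i, Measurable (ξ n i)) (A : Set (ℕ × ℕ))
    (Φ : (ℕ × ℕ → ℕ) → Prop) (hΦm : MeasurableSet {x | Φ x})
    (hdep : ∀ x x', (∀ p ∈ A, x p = x' p) → Φ x → Φ x') :
    MeasurableSet[grp ξ A] {ω | Φ (fun p => ξ p.1 p.2 ω)} := by
  classical
  set g : Ω → ℕ × ℕ → ℕ := fun ω p => if p ∈ A then ξ p.1 p.2 ω else 0 with hg_def
  have hg : Measurable[grp ξ A] g := by
    refine @measurable_pi_lambda Ω (ℕ × ℕ) (fun _ => ℕ) (grp ξ A) _ g (fun p => ?_)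
    by_cases hp : p ∈ A
    · have h1 : Measurable[grp ξ A] (fun ω => ξ p.1 p.2 ω) :=
        measurable_iff_comap_le.mpr (le_grp hp)
      simpa only [hg_def, hp, if_true] using h1
    · simpa only [hg_def, hp, if_false] using (measurable_const :
        Measurable[grp ξ A] (fun _ : Ω => (0 : ℕ)))
  have hset : {ω | Φ (fun p => ξ p.1 p.2 ω)} = g ⁻¹' {x | Φ x} := by
    ext ω
    simp only [Set.mem_preimage, Set.mem_setOf_eq]
    constructor
    · intro h
      exact hdep _ _ (fun p hp => by simp [hg_def, hp]) h
    · intro h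
      exact hdep _ _ (fun p hp => by simp [hg_def, hp]) h
  rw [hset]
  exact hg hΦm

lemma grp_mono {A B : Set (ℕ × ℕ)} (hAB : A ⊆ B) : grp ξ A ≤ grp ξ B :=
  iSup₂_le fun _p hp => le_grp (hAB hp)

lemma atom_law (hmeas : ∀ n i, Measurable (ξ n i))
    (hindep : iIndepFun (fun p : ℕ × ℕ => ξ p.1 p.2) μ)
    (hident : ∀ n i, Measure.map (ξ n i) μ = Measure.map (ξ 0 0) μ)
    {n : ℕ} (p : Fin n → ℕ × ℕ) (hp : Function.Injective p) (y : Fin n → ℕ) :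
    μ (⋂ i, {ω | ξ (p i).1 (p i).2 ω = y i})
      = ∏ i, (Measure.map (ξ 0 0) μ) {y i} := by
  classical
  set sets : ℕ × ℕ → Set ℕ := fun q => {z | ∀ i, p i = q → z = y i} with hsets_def
  have hmeas_sets : ∀ q ∈ Finset.univ.image p, MeasurableSet (sets q) :=
    fun q _ => (Set.to_countable _).measurableSet
  have h := hindep.measure_inter_preimage_eq_mul (Finset.univ.image p) hmeas_sets
  have hInter : (⋂ q ∈ Finset.univ.image p, (fun ω => ξ q.1 q.2 ω) ⁻¹' sets q)
      = ⋂ i, {ω | ξ (p i).1 (p i).2 ω = y i} := by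
    ext ω
    simp only [Set.mem_iInter, Set.mem_preimage, hsets_def, Set.mem_setOf_eq,
      Finset.mem_image, Finset.mem_univ, true_and]
    constructor
    · intro h i
      exact h (p i) ⟨i, rfl⟩ i rfl
    · rintro h q ⟨i, rfl⟩ i' hi'
      rw [← hi']
      exact h i'
  have hProd : ∏ q ∈ Finset.univ.image p, μ ((fun ω => ξ q.1 q.2 ω) ⁻¹' sets q)
      = ∏ i, (Measure.map (ξ 0 0) μ) {y i} := by
    rw [Finset.prod_image (fun a _ b _ hab => hp hab)]
    refine Finset.prod_congr rfl (fun i _ => ?_)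
    have hsi : sets (p i) = {y i} := by
      ext z
      simp only [hsets_def, Set.mem_setOf_eq, Set.mem_singleton_iff]
      constructor
      · intro h; exact h i rfl
      · intro h i' hi'; rw [h]; rw [hp hi']
    rw [hsi, ← Measure.map_apply (hmeas (p i).1 (p i).2) (measurableSet_singleton (y i)),
      hident (p i).1 (p i).2]
  rw [hInter, hProd] at h
  exact h

lemma sum_law (hmeas : ∀ n i, Measurable (ξ n i))
    (hindep : iIndepFun (fun p : ℕ × ℕ => ξ p.1 p.2) μ)
    (hident : ∀ n i, Measure.map (ξ n i) μ = Measure.map (ξ 0 0) μ)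
    {n : ℕ} (p : Fin n → ℕ × ℕ) (hp : Function.Injective p) (c : ℕ) :
    μ {ω | ∑ i, ξ (p i).1 (p i).2 ω = c}
      = ∑' y : {y : Fin n → ℕ // ∑ i, y i = c}, ∏ i, (Measure.map (ξ 0 0) μ) {(y : Fin n → ℕ) i} := by
  have hsplit : {ω | ∑ i, ξ (p i).1 (p i).2 ω = c}
      = ⋃ y : {y : Fin n → ℕ // ∑ i, y i = c},
          ⋂ i, {ω | ξ (p i).1 (p i).2 ω = (y : Fin n → ℕ) i} := by
    ext ω
    simp only [Set.mem_setOf_eq, Set.mem_iUnion, Set.mem_iInter]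
    constructor
    · intro h
      exact ⟨⟨fun i => ξ (p i).1 (p i).2 ω, h⟩, fun i => rfl⟩
    · rintro ⟨⟨y, hy⟩, h⟩
      simp only at h
      rw [Finset.sum_congr rfl (fun i _ => h i)]
      exact hy
  have hdisj : Pairwise (Function.onFun Disjoint
      (fun y : {y : Fin n → ℕ // ∑ i, y i = c} =>
        ⋂ i, {ω | ξ (p i).1 (p i).2 ω = (y : Fin n → ℕ) i})) := by
    intro y y' hyy'
    refine Set.disjoint_left.mpr (fun ω hy hy' => hyy' ?_)
    ext i
    simp only [Set.mem_iInter, Set.mem_setOf_eq] at hy hy'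
    rw [← hy i, ← hy' i]
  have hmeasAtom : ∀ y : {y : Fin n → ℕ // ∑ i, y i = c},
      MeasurableSet (⋂ i, {ω | ξ (p i).1 (p i).2 ω = (y : Fin n → ℕ) i}) :=
    fun y => MeasurableSet.iInter (fun i =>
      (hmeas (p i).1 (p i).2) (measurableSet_singleton _))
  rw [hsplit, measure_iUnion hdisj hmeasAtom]
  exact tsum_congr (fun y => atom_law hmeas hindep hident p hp _)

lemma sum_law_eq (hmeas : ∀ n i, Measurable (ξ n i))
    (hindep : iIndepFun (fun p : ℕ × ℕ => ξ p.1 p.2) μ)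
    (hident : ∀ n i, Measure.map (ξ n i) μ = Measure.map (ξ 0 0) μ)
    {n : ℕ} (p p' : Fin n → ℕ × ℕ) (hp : Function.Injective p) (hp' : Function.Injective p')
    (c : ℕ) :
    μ {ω | ∑ i, ξ (p i).1 (p i).2 ω = c} = μ {ω | ∑ i, ξ (p' i).1 (p' i).2 ω = c} := by
  rw [sum_law hmeas hindep hident p hp c, sum_law hmeas hindep hident p' hp' c]


variable {Ω : Type*} [MeasurableSpace Ω] {μ : Measure Ω} [IsProbabilityMeasure μ]
  {ξ : ℕ → ℕ → Ω → ℕ}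

lemma gw_traj (x : ℕ × ℕ → ℕ) (w : ℕ → ℕ) (hw0 : w 0 = 1) (K : ℕ) :
    (∀ m ≤ K, gw x m = w m) ↔ ∀ m < K, ∑ i ∈ Finset.range (w m), x (m, i) = w (m + 1) := by
  constructor
  · intro h m hm
    have h1 : gw x (m + 1) = w (m + 1) := h (m + 1) hm
    rw [← h1]
    show ∑ i ∈ Finset.range (w m), x (m, i) = gw x (m+1)
    rw [show gw x (m+1) = ∑ i ∈ Finset.range (gw x m), x (m, i) from rfl,
      h m (le_of_lt hm)]
  · intro h m hm
    induction m with
    | zero => rw [hw0]; rfl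
    | succ m ih =>
      have hm' : m < K := hm
      rw [show gw x (m+1) = ∑ i ∈ Finset.range (gw x m), x (m, i) from rfl,
        ih (le_of_lt hm'), h m hm']

/-- measure of a trajectory event, as a product over generations -/
lemma traj_prob (hmeas : ∀ n i, Measurable (ξ n i))
    (hindep : iIndepFun (fun p : ℕ × ℕ => ξ p.1 p.2) μ)
    (e : ℕ × ℕ → ℕ × ℕ) (he : Function.Injective e)
    (w : ℕ → ℕ) (hw0 : w 0 = 1) (K : ℕ) :
    μ {ω | ∀ m ≤ K, gw (fun p => ξ (e p).1 (e p).2 ω) m = w m}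
      = ∏ m ∈ Finset.range K,
          μ {ω | ∑ i ∈ Finset.range (w m), ξ (e (m, i)).1 (e (m, i)).2 ω = w (m + 1)} := by
  induction K with
  | zero =>
    have : {ω : Ω | ∀ m ≤ 0, gw (fun p => ξ (e p).1 (e p).2 ω) m = w m} = Set.univ := by
      ext ω
      simp only [Set.mem_setOf_eq, Set.mem_univ, iff_true, Nat.le_zero]
      rintro m rfl
      rw [hw0]; rfl
    rw [this]
    simp
  | succ K ih =>
    -- rewrite the trajectory events via gw_traj
    have hsetK : ∀ K' : ℕ, {ω : Ω | ∀ m ≤ K', gw (fun p => ξ (e p).1 (e p).2 ω) m = w m}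
        = {ω : Ω | ∀ m < K', ∑ i ∈ Finset.range (w m), ξ (e (m, i)).1 (e (m, i)).2 ω
            = w (m + 1)} := by
      intro K'
      ext ω
      simpa using gw_traj (fun p => ξ (e p).1 (e p).2 ω) w hw0 K'
    rw [hsetK]
    have hsplit : {ω : Ω | ∀ m < K + 1, ∑ i ∈ Finset.range (w m),
          ξ (e (m, i)).1 (e (m, i)).2 ω = w (m + 1)}
        = {ω : Ω | ∀ m < K, ∑ i ∈ Finset.range (w m),
            ξ (e (m, i)).1 (e (m, i)).2 ω = w (m + 1)}
          ∩ {ω : Ω | ∑ i ∈ Finset.range (w K), ξ (e (K, i)).1 (e (K, i)).2 ω = w (K + 1)} := by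
      ext ω
      simp only [Set.mem_setOf_eq, Set.mem_inter_iff, Nat.lt_succ_iff_lt_or_eq]
      constructor
      · intro h
        exact ⟨fun m hm => h m (Or.inl hm), h K (Or.inr rfl)⟩
      · rintro ⟨h1, h2⟩ m (hm | rfl)
        · exact h1 m hm
        · exact h2
    rw [hsplit]
    -- independence of the first K generations from generation K
    have hA : MeasurableSet[grp ξ (e '' {p : ℕ × ℕ | p.1 < K})]
        {ω : Ω | ∀ m < K, ∑ i ∈ Finset.range (w m),
          ξ (e (m, i)).1 (e (m, i)).2 ω = w (m + 1)} := by
      have := measurableSet_grp hmeas (e '' {p : ℕ × ℕ | p.1 < K})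
        (fun x => ∀ m < K, ∑ i ∈ Finset.range (w m), x (e (m, i)) = w (m + 1))
        (by
          have : {x : ℕ × ℕ → ℕ | ∀ m < K, ∑ i ∈ Finset.range (w m), x (e (m, i)) = w (m + 1)}
              = ⋂ m, ⋂ (_ : m < K),
                (fun x : ℕ × ℕ → ℕ => ∑ i ∈ Finset.range (w m), x (e (m, i))) ⁻¹' {w (m + 1)} := by
            ext x; simp [Set.mem_iInter]
          rw [this]
          exact MeasurableSet.iInter fun m => MeasurableSet.iInter fun _ =>
            (Finset.measurable_sum _ fun i _ => measurable_pi_apply (e (m, i)))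
              (measurableSet_singleton _))
        (by
          intro x x' hxx' h m hm
          rw [← h m hm]
          exact Finset.sum_congr rfl fun i _ =>
            (hxx' (e (m, i)) (Set.mem_image_of_mem e hm)).symm)
      exact this
    have hB : MeasurableSet[grp ξ (e '' {p : ℕ × ℕ | p.1 = K})]
        {ω : Ω | ∑ i ∈ Finset.range (w K), ξ (e (K, i)).1 (e (K, i)).2 ω = w (K + 1)} := by
      have := measurableSet_grp hmeas (e '' {p : ℕ × ℕ | p.1 = K})
        (fun x => ∑ i ∈ Finset.range (w K), x (e (K, i)) = w (K + 1))
        ((Finset.measurable_sum _ fun i _ => measurable_pi_apply (e (K, i)))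
          (measurableSet_singleton _))
        (by
          intro x x' hxx' h
          rw [← h]
          exact Finset.sum_congr rfl fun i _ =>
            (hxx' (e (K, i)) (Set.mem_image_of_mem e rfl)).symm)
      exact this
    have hdisj : Disjoint (e '' {p : ℕ × ℕ | p.1 < K}) (e '' {p : ℕ × ℕ | p.1 = K}) := by
      rw [Set.disjoint_left]
      rintro q ⟨p1, hp1, rfl⟩ ⟨p2, hp2, hq⟩
      have : p2 = p1 := he hq
      rw [this] at hp2
      exact absurd hp2 (Nat.ne_of_lt hp1)
    have hindep2 := indep_grp hmeas hindep hdisj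
    rw [hsetK K] at ih
    rw [(Indep_iff _ _ _).mp hindep2 _ _ hA hB, ih, Finset.prod_range_succ]

lemma gw_law (hmeas : ∀ n i, Measurable (ξ n i))
    (hindep : iIndepFun (fun p : ℕ × ℕ => ξ p.1 p.2) μ)
    (hident : ∀ n i, Measure.map (ξ n i) μ = Measure.map (ξ 0 0) μ)
    (e : ℕ × ℕ → ℕ × ℕ) (he : Function.Injective e) (K : ℕ) (cond : ℕ → Prop) :
    μ {ω | cond (gw (fun p => ξ (e p).1 (e p).2 ω) K)}
      = μ {ω | cond (gw (fun p => ξ p.1 p.2 ω) K)} := by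
  classical
  -- trajectory events have equal probabilities
  have htraj : ∀ w : ℕ → ℕ,
      μ {ω | ∀ m ≤ K, gw (fun p => ξ (e p).1 (e p).2 ω) m = w m}
        = μ {ω | ∀ m ≤ K, gw (fun p => ξ p.1 p.2 ω) m = w m} := by
    intro w
    by_cases hw0 : w 0 = 1
    · rw [traj_prob hmeas hindep e he w hw0 K,
        show {ω : Ω | ∀ m ≤ K, gw (fun p => ξ p.1 p.2 ω) m = w m}
          = {ω : Ω | ∀ m ≤ K, gw (fun p => ξ (id p : ℕ × ℕ).1 (id p : ℕ × ℕ).2 ω) m = w m} from rfl,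
        traj_prob hmeas hindep id Function.injective_id w hw0 K]
      refine Finset.prod_congr rfl fun m _ => ?_
      have h1 : {ω : Ω | ∑ i ∈ Finset.range (w m), ξ (e (m, i)).1 (e (m, i)).2 ω = w (m + 1)}
          = {ω : Ω | ∑ i : Fin (w m), ξ (e (m, (i : ℕ))).1 (e (m, (i : ℕ))).2 ω = w (m + 1)} := by
        ext ω; simp [Finset.sum_range fun i => ξ (e (m, i)).1 (e (m, i)).2 ω]
      have h2 : {ω : Ω | ∑ i ∈ Finset.range (w m), ξ (id (m, i) : ℕ × ℕ).1
            (id (m, i) : ℕ × ℕ).2 ω = w (m + 1)}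
          = {ω : Ω | ∑ i : Fin (w m), ξ m (i : ℕ) ω = w (m + 1)} := by
        ext ω; simp [Finset.sum_range fun i => ξ m i ω]
      rw [h1, h2]
      have hpinj : Function.Injective (fun i : Fin (w m) => e (m, (i : ℕ))) := by
        intro a b hab
        have h := he hab
        exact Fin.ext (by simpa using congrArg Prod.snd h)
      have hpinj' : Function.Injective (fun i : Fin (w m) => ((m, (i : ℕ)) : ℕ × ℕ)) := by
        intro a b hab
        exact Fin.ext (by simpa using congrArg Prod.snd hab)
      exact sum_law_eq hmeas hindep hident (fun i : Fin (w m) => e (m, (i : ℕ)))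
        (fun i : Fin (w m) => ((m, (i : ℕ)) : ℕ × ℕ)) hpinj hpinj' (w (m + 1))
    · have h1 : {ω : Ω | ∀ m ≤ K, gw (fun p => ξ (e p).1 (e p).2 ω) m = w m} = ∅ := by
        ext ω
        simp only [Set.mem_setOf_eq, Set.mem_empty_iff_false, iff_false, not_forall]
        exact ⟨0, by simpa [gw] using fun h => hw0 h.symm⟩
      have h2 : {ω : Ω | ∀ m ≤ K, gw (fun p => ξ p.1 p.2 ω) m = w m} = ∅ := by
        ext ω
        simp only [Set.mem_setOf_eq, Set.mem_empty_iff_false, iff_false, not_forall]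
        exact ⟨0, by simpa [gw] using fun h => hw0 h.symm⟩
      rw [h1, h2]
  -- decompose the condition event over trajectories
  have hdecomp : ∀ e' : ℕ × ℕ → ℕ × ℕ,
      μ {ω | cond (gw (fun p => ξ (e' p).1 (e' p).2 ω) K)}
        = ∑' w : {w : Fin (K + 1) → ℕ // cond (w (Fin.last K))},
            μ {ω | ∀ m ≤ K, gw (fun p => ξ (e' p).1 (e' p).2 ω) m
                = (fun m' : ℕ => if h : m' < K + 1 then (w : Fin (K + 1) → ℕ) ⟨m', h⟩ else 0) m} := by
    intro e'
    have hunion : {ω | cond (gw (fun p => ξ (e' p).1 (e' p).2 ω) K)}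
        = ⋃ w : {w : Fin (K + 1) → ℕ // cond (w (Fin.last K))},
            {ω | ∀ m ≤ K, gw (fun p => ξ (e' p).1 (e' p).2 ω) m
              = (fun m' : ℕ => if h : m' < K + 1 then (w : Fin (K + 1) → ℕ) ⟨m', h⟩ else 0) m} := by
      ext ω
      simp only [Set.mem_setOf_eq, Set.mem_iUnion]
      constructor
      · intro h
        refine ⟨⟨fun m => gw (fun p => ξ (e' p).1 (e' p).2 ω) (m : ℕ), by
          simpa [Fin.last] using h⟩, fun m hm => ?_⟩
        simp only [Nat.lt_succ_iff.mpr hm, dif_pos]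
      · rintro ⟨⟨w, hw⟩, h⟩
        have hK := h K le_rfl
        simp only [Nat.lt_succ_self, dif_pos] at hK
        rw [hK]
        exact hw
    rw [hunion]
    refine measure_iUnion ?_ ?_
    · rintro ⟨w, hw⟩ ⟨w', hw'⟩ hne
      refine Set.disjoint_left.mpr fun ω h h' => hne ?_
      simp only [Set.mem_setOf_eq] at h h'
      refine Subtype.ext (funext fun m => ?_)
      have h1 := h (m : ℕ) (Nat.lt_succ_iff.mp m.isLt)
      have h2 := h' (m : ℕ) (Nat.lt_succ_iff.mp m.isLt)
      rw [h1] at h2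
      simpa [m.isLt] using h2
    · intro w
      have : {ω | ∀ m ≤ K, gw (fun p => ξ (e' p).1 (e' p).2 ω) m
            = (fun m' : ℕ => if h : m' < K + 1 then (w : Fin (K + 1) → ℕ) ⟨m', h⟩ else 0) m}
          = ⋂ m, ⋂ (_ : m ≤ K), (fun ω => gw (fun p => ξ (e' p).1 (e' p).2 ω) m) ⁻¹'
              {(fun m' : ℕ => if h : m' < K + 1 then (w : Fin (K + 1) → ℕ) ⟨m', h⟩ else 0) m} := by
        ext ω; simp [Set.mem_iInter]
      rw [this]
      refine MeasurableSet.iInter fun m => MeasurableSet.iInter fun _ => ?_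
      exact ((measurable_gw m).comp
        (measurable_pi_lambda _ fun p => hmeas (e' p).1 (e' p).2)) (measurableSet_singleton _)
  rw [hdecomp e,
    show {ω : Ω | cond (gw (fun p => ξ p.1 p.2 ω) K)}
      = {ω : Ω | cond (gw (fun p => ξ (id p : ℕ × ℕ).1 (id p : ℕ × ℕ).2 ω) K)} from rfl,
    hdecomp id]
  refine tsum_congr fun w => ?_
  exact htraj _


variable {Ω : Type*} [MeasurableSpace Ω] {μ : Measure Ω} [IsProbabilityMeasure μ]
  {ξ : ℕ → ℕ → Ω → ℕ}

/-- the total population at generation `ℓ + m` is the sum of the subtree populations -/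
lemma subtree_sum (Z : ℕ → Ω → ℕ)
    (hZrec : ∀ n ω, Z (n + 1) ω = ∑ i ∈ Finset.range (Z n ω), ξ n i ω)
    (ℓ j : ℕ) (ω : Ω) (hj : Z ℓ ω = j) (m : ℕ) :
    ∑ u ∈ Finset.range j, sub (fun p => ξ p.1 p.2 ω) ℓ m u = Z (ℓ + m) ω := by
  induction m with
  | zero => simpa [sub] using hj.symm
  | succ m ih =>
    have h1 : Z (ℓ + (m + 1)) ω = ∑ i ∈ Finset.range (Z (ℓ + m) ω), ξ (ℓ + m) i ω := by
      rw [← Nat.add_assoc]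
      exact hZrec (ℓ + m) ω
    rw [h1, ← ih, sum_blocks (fun i => ξ (ℓ + m) i ω) (fun u => sub (fun p => ξ p.1 p.2 ω) ℓ m u) j]
    rfl

/-- if the first `t` subtrees follow trajectories `v`, then perturbing coordinates outside
the region they read does not change them -/
lemma sub_congr (x x' : ℕ × ℕ → ℕ) (ℓ t K : ℕ) (v : ℕ → ℕ → ℕ)
    (hx : ∀ u < t, ∀ m ≤ K, sub x ℓ m u = v u m)
    (hagree : ∀ m < K, ∀ i < ∑ u ∈ Finset.range t, v u m, x (ℓ + m, i) = x' (ℓ + m, i)) :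
    ∀ m ≤ K, ∀ u < t, sub x' ℓ m u = v u m := by
  intro m
  induction m with
  | zero =>
    intro _ u hu
    rw [← hx u hu 0 (Nat.zero_le K)]
    rfl
  | succ m ih =>
    intro hm u hu
    have hmK : m ≤ K := le_of_lt hm
    have hstep : sub x' ℓ (m + 1) u
        = ∑ i ∈ Finset.range (sub x' ℓ m u),
            x' (ℓ + m, (∑ w ∈ Finset.range u, sub x' ℓ m w) + i) := rfl
    have hsame : ∀ w < t, sub x' ℓ m w = v w m := fun w hw => ih hmK w hw
    rw [hstep, hsame u hu,
      Finset.sum_congr rfl (fun w hw => hsame w (lt_of_lt_of_le (Finset.mem_range.mp hw) hu.le))]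
    have hcols : ∀ i < v u m,
        x' (ℓ + m, (∑ w ∈ Finset.range u, v w m) + i)
          = x (ℓ + m, (∑ w ∈ Finset.range u, v w m) + i) := by
      intro i hi
      refine (hagree m hm _ ?_).symm
      calc (∑ w ∈ Finset.range u, v w m) + i
          < ∑ w ∈ Finset.range (u + 1), v w m := by
            rw [Finset.sum_range_succ]; omega
        _ ≤ ∑ w ∈ Finset.range t, v w m := by
            refine Finset.sum_le_sum_of_subset ?_
            exact Finset.range_subset_range.mpr hu
    rw [Finset.sum_congr rfl (fun i hi => hcols i (Finset.mem_range.mp hi))]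
    rw [← hx u hu (m + 1) hm]
    have hsame' : ∀ w < t, sub x ℓ m w = v w m := fun w hw => hx w hw m hmK
    have hstep' : sub x ℓ (m + 1) u
        = ∑ i ∈ Finset.range (sub x ℓ m u),
            x (ℓ + m, (∑ w ∈ Finset.range u, sub x ℓ m w) + i) := rfl
    rw [hstep', hsame' u hu,
      Finset.sum_congr rfl (fun w hw => hsame' w (lt_of_lt_of_le (Finset.mem_range.mp hw) hu.le))]

/-- on a trajectory event, the `t`-th subtree is a Galton–Watson process read off at
deterministic offsets -/
lemma sub_eq_gw_offsets (x : ℕ × ℕ → ℕ) (ℓ t K : ℕ) (v : ℕ → ℕ → ℕ)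
    (hx : ∀ u < t, ∀ m ≤ K, sub x ℓ m u = v u m) :
    ∀ m ≤ K, sub x ℓ m t
      = gw (fun p => x (ℓ + p.1, (∑ u ∈ Finset.range t, v u p.1) + p.2)) m := by
  intro m
  induction m with
  | zero => intro _; rfl
  | succ m ih =>
    intro hm
    have hmK : m ≤ K := le_of_lt hm
    have hstep : sub x ℓ (m + 1) t
        = ∑ i ∈ Finset.range (sub x ℓ m t),
            x (ℓ + m, (∑ w ∈ Finset.range t, sub x ℓ m w) + i) := rfl
    rw [hstep, ih hmK, Finset.sum_congr rfl (fun w hw => hx w (Finset.mem_range.mp hw) m hmK)]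
    rfl


variable {Ω : Type*} [MeasurableSpace Ω] {μ : Measure Ω} [IsProbabilityMeasure μ]
  {ξ : ℕ → ℕ → Ω → ℕ}

def vb (t K : ℕ) (v : Fin t → Fin (K + 1) → ℕ) (u m : ℕ) : ℕ :=
  if h : u < t ∧ m < K + 1 then v ⟨u, h.1⟩ ⟨m, h.2⟩ else 0

lemma vb_coe {t K : ℕ} (v : Fin t → Fin (K + 1) → ℕ) (u : Fin t) (m : Fin (K + 1)) :
    vb t K v u m = v u m := by
  unfold vb
  rw [dif_pos ⟨u.isLt, m.isLt⟩]

set_option maxHeartbeats 1000000 in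
lemma one_subtree_step (hmeas : ∀ n i, Measurable (ξ n i))
    (hindep : iIndepFun (fun p : ℕ × ℕ => ξ p.1 p.2) μ)
    (hident : ∀ n i, Measure.map (ξ n i) μ = Measure.map (ξ 0 0) μ)
    (ℓ K t j : ℕ) (β : ℝ) (r : ENNReal)
    (hb : μ {ω | ((gw (fun p => ξ p.1 p.2 ω) K : ℕ) : ℝ) < β} ≤ r) :
    μ (({ω | gw (fun p => ξ p.1 p.2 ω) ℓ = j}
        ∩ ⋂ u, ⋂ (_ : u < t), {ω | ((sub (fun p => ξ p.1 p.2 ω) ℓ K u : ℕ) : ℝ) < β})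
       ∩ {ω | ((sub (fun p => ξ p.1 p.2 ω) ℓ K t : ℕ) : ℝ) < β})
      ≤ r * μ ({ω | gw (fun p => ξ p.1 p.2 ω) ℓ = j}
        ∩ ⋂ u, ⋂ (_ : u < t), {ω | ((sub (fun p => ξ p.1 p.2 ω) ℓ K u : ℕ) : ℝ) < β}) := by
  classical
  have hxm : Measurable (fun ω (p : ℕ × ℕ) => ξ p.1 p.2 ω) :=
    measurable_pi_lambda _ fun p => hmeas p.1 p.2
  have hgwm : ∀ n, Measurable (fun ω => gw (fun p => ξ p.1 p.2 ω) n) :=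
    fun n => (measurable_gw n).comp hxm
  have hsubm : ∀ m u, Measurable (fun ω => sub (fun p => ξ p.1 p.2 ω) ℓ m u) :=
    fun m u => (measurable_sub ℓ m u).comp hxm
  set G0 : Set Ω := {ω | gw (fun p => ξ p.1 p.2 ω) ℓ = j} with hG0_def
  set F : ℕ → Set Ω :=
    fun u => {ω | ((sub (fun p => ξ p.1 p.2 ω) ℓ K u : ℕ) : ℝ) < β} with hF_def
  set G : Set Ω := G0 ∩ ⋂ u, ⋂ (_ : u < t), F u with hG_def
  have hG0meas : MeasurableSet G0 := hgwm ℓ (measurableSet_singleton j)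
  have hFmeas : ∀ u, MeasurableSet (F u) := fun u =>
    hsubm K u ((Set.to_countable {n : ℕ | (n : ℝ) < β}).measurableSet)
  have hGmeas : MeasurableSet G :=
    hG0meas.inter (.iInter fun u => .iInter fun _ => hFmeas u)
  -- trajectory partition
  set D : (Fin t → Fin (K + 1) → ℕ) → Set Ω := fun v =>
    {ω | ∀ (u : Fin t) (m : Fin (K + 1)),
      sub (fun p => ξ p.1 p.2 ω) ℓ (m : ℕ) (u : ℕ) = v u m} with hD_def
  have hDmeas : ∀ v, MeasurableSet (D v) := by
    intro v
    have : D v = ⋂ (u : Fin t), ⋂ (m : Fin (K + 1)),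
        (fun ω => sub (fun p => ξ p.1 p.2 ω) ℓ (m : ℕ) (u : ℕ)) ⁻¹' {v u m} := by
      ext ω; simp [hD_def]
    rw [this]
    exact .iInter fun u => .iInter fun m => hsubm _ _ (measurableSet_singleton _)
  have hDdisj : Pairwise (Function.onFun Disjoint D) := by
    intro v v' hne
    refine Set.disjoint_left.mpr fun ω h h' => hne ?_
    funext u m
    rw [← h u m, ← h' u m]
  have hpart : ∀ Em : Set Ω, MeasurableSet Em → μ Em = ∑' v, μ (Em ∩ D v) := by
    intro Em hEm
    have hcov : Em = ⋃ v, Em ∩ D v := by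
      ext ω
      constructor
      · intro h
        exact Set.mem_iUnion.mpr ⟨fun u m => sub (fun p => ξ p.1 p.2 ω) ℓ (m : ℕ) (u : ℕ),
          h, fun u m => rfl⟩
      · intro h
        obtain ⟨v, hv, _⟩ := Set.mem_iUnion.mp h
        exact hv
    conv_lhs => rw [hcov]
    exact measure_iUnion
      (fun v v' hne => (hDdisj hne).mono Set.inter_subset_right Set.inter_subset_right)
      (fun v => hEm.inter (hDmeas v))
  -- termwise estimate
  have hterm : ∀ v, μ ((G ∩ F t) ∩ D v) ≤ r * μ (G ∩ D v) := by
    intro v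
    by_cases hgood : ∀ u : Fin t, ((v u (Fin.last K) : ℕ) : ℝ) < β
    · set c : ℕ → ℕ := fun m => ∑ u ∈ Finset.range t, vb t K v u m with hc_def
      have hDv_traj : ∀ ω ∈ D v, ∀ u < t, ∀ m ≤ K,
          sub (fun p => ξ p.1 p.2 ω) ℓ m u = vb t K v u m := by
        intro ω hω u hu m hm
        have h1 := hω ⟨u, hu⟩ ⟨m, Nat.lt_succ_of_le hm⟩
        unfold vb
        rw [dif_pos ⟨hu, Nat.lt_succ_of_le hm⟩]
        exact h1
      have hGD : G ∩ D v = G0 ∩ D v := by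
        apply Set.Subset.antisymm
        · exact fun ω hω => ⟨hω.1.1, hω.2⟩
        · rintro ω ⟨h0, hD⟩
          refine ⟨⟨h0, Set.mem_iInter.mpr fun u => Set.mem_iInter.mpr fun hu => ?_⟩, hD⟩
          show ((sub (fun p => ξ p.1 p.2 ω) ℓ K u : ℕ) : ℝ) < β
          have h2 := hD ⟨u, hu⟩ (Fin.last K)
          rw [show ((Fin.last K : Fin (K + 1)) : ℕ) = K from rfl] at h2
          rw [h2]
          exact hgood ⟨u, hu⟩
      have hFceq : ∀ ω ∈ D v,
          sub (fun p => ξ p.1 p.2 ω) ℓ K t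
            = gw (fun p : ℕ × ℕ => ξ (ℓ + p.1) (c p.1 + p.2) ω) K := by
        intro ω hω
        exact sub_eq_gw_offsets (fun p => ξ p.1 p.2 ω) ℓ t K (vb t K v)
          (fun u hu m hm => hDv_traj ω hω u hu m hm) K le_rfl
      set Fc : Set Ω :=
        {ω | ((gw (fun p : ℕ × ℕ => ξ (ℓ + p.1) (c p.1 + p.2) ω) K : ℕ) : ℝ) < β} with hFc_def
      have hsetEq : (G ∩ F t) ∩ D v = (G0 ∩ D v) ∩ Fc := by
        ext ω
        constructor
        · rintro ⟨⟨hG, hF⟩, hD⟩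
          refine ⟨⟨hG.1, hD⟩, ?_⟩
          show ((gw (fun p : ℕ × ℕ => ξ (ℓ + p.1) (c p.1 + p.2) ω) K : ℕ) : ℝ) < β
          rw [← hFceq ω hD]
          exact hF
        · rintro ⟨⟨h0, hD⟩, hFc⟩
          have hω : ω ∈ G ∩ D v := hGD.symm ▸ (⟨h0, hD⟩ : ω ∈ G0 ∩ D v)
          refine ⟨⟨hω.1, ?_⟩, hD⟩
          show ((sub (fun p => ξ p.1 p.2 ω) ℓ K t : ℕ) : ℝ) < β
          rw [hFceq ω hD]
          exact hFc
      set A : Set (ℕ × ℕ) := {p | p.1 < ℓ} ∪ {p | ∃ m, m < K ∧ p.1 = ℓ + m ∧ p.2 < c m}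
        with hA_def
      set B : Set (ℕ × ℕ) := {p | ∃ m, m < K ∧ ∃ i, p = (ℓ + m, c m + i)} with hB_def
      have hABdisj : Disjoint A B := by
        rw [Set.disjoint_left]
        rintro p hp ⟨m, hm, i, rfl⟩
        rcases hp with h | ⟨m', hm', h1, h2⟩
        · simp only [Set.mem_setOf_eq] at h
          omega
        · simp only at h1 h2
          have : m' = m := by omega
          subst this
          omega
      have hMA : MeasurableSet[grp ξ A] (G0 ∩ D v) := by
        have heq : G0 ∩ D v
            = {ω | (fun x => gw x ℓ = j ∧ ∀ u < t, ∀ m ≤ K, sub x ℓ m u = vb t K v u m)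
                (fun p => ξ p.1 p.2 ω)} := by
          ext ω
          simp only [hG0_def, hD_def, Set.mem_inter_iff, Set.mem_setOf_eq]
          constructor
          · rintro ⟨h0, hD⟩
            exact ⟨h0, fun u hu m hm => hDv_traj ω hD u hu m hm⟩
          · rintro ⟨h0, hD⟩
            refine ⟨h0, fun u m => ?_⟩
            rw [hD (u : ℕ) u.isLt (m : ℕ) (Nat.lt_succ_iff.mp m.isLt), vb_coe]
        rw [heq]
        refine measurableSet_grp hmeas A
          (fun x => gw x ℓ = j ∧ ∀ u < t, ∀ m ≤ K, sub x ℓ m u = vb t K v u m) ?_ ?_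
        · have heq2 : {x : ℕ × ℕ → ℕ | gw x ℓ = j ∧ ∀ u < t, ∀ m ≤ K, sub x ℓ m u = vb t K v u m}
              = ((fun x => gw x ℓ) ⁻¹' {j}) ∩ ⋂ u, ⋂ (_ : u < t), ⋂ m, ⋂ (_ : m ≤ K),
                  (fun x => sub x ℓ m u) ⁻¹' {vb t K v u m} := by
            ext x; simp [Set.mem_iInter]
          rw [heq2]
          exact ((measurable_gw ℓ) (measurableSet_singleton _)).inter
            (.iInter fun u => .iInter fun _ => .iInter fun m => .iInter fun _ =>
              (measurable_sub ℓ m u) (measurableSet_singleton _))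
        · rintro x x' hagree ⟨h0, hsub⟩
          constructor
          · rw [← gw_congr (fun p hp => hagree p (Or.inl hp))]
            exact h0
          · intro u hu m hm
            exact sub_congr x x' ℓ t K (vb t K v) hsub
              (fun m' hm' i hi => hagree (ℓ + m', i) (Or.inr ⟨m', hm', rfl, hi⟩)) m hm u hu
      have hMB : MeasurableSet[grp ξ B] Fc := by
        have heq : Fc = {ω | (fun x : ℕ × ℕ → ℕ =>
            ((gw (fun p : ℕ × ℕ => x (ℓ + p.1, c p.1 + p.2)) K : ℕ) : ℝ) < β)
              (fun p => ξ p.1 p.2 ω)} := rfl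
        rw [heq]
        refine measurableSet_grp hmeas B
          (fun x : ℕ × ℕ → ℕ =>
            ((gw (fun p : ℕ × ℕ => x (ℓ + p.1, c p.1 + p.2)) K : ℕ) : ℝ) < β) ?_ ?_
        · have : MeasurableSet (((fun x : ℕ × ℕ → ℕ =>
              gw (fun p : ℕ × ℕ => x (ℓ + p.1, c p.1 + p.2)) K)) ⁻¹' {n : ℕ | (n : ℝ) < β}) :=
            ((measurable_gw K).comp (measurable_pi_lambda _ fun p =>
              measurable_pi_apply _)) ((Set.to_countable _).measurableSet)
          exact this
        · intro x x' hagree h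
          have heq2 : gw (fun p : ℕ × ℕ => x (ℓ + p.1, c p.1 + p.2)) K
              = gw (fun p : ℕ × ℕ => x' (ℓ + p.1, c p.1 + p.2)) K :=
            gw_congr fun p hp => hagree (ℓ + p.1, c p.1 + p.2) ⟨p.1, hp, p.2, rfl⟩
          rwa [heq2] at h
      have hprod := (Indep_iff _ _ _).mp (indep_grp hmeas hindep hABdisj) _ _ hMA hMB
      have hFcB : μ Fc ≤ r := by
        have hinj : Function.Injective (fun p : ℕ × ℕ => ((ℓ + p.1, c p.1 + p.2) : ℕ × ℕ)) := by
          rintro ⟨a, b⟩ ⟨a', b'⟩ h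
          simp only [Prod.mk.injEq] at h
          obtain ⟨h1, h2⟩ := h
          have ha : a = a' := by omega
          subst ha
          have hb2 : b = b' := by omega
          rw [hb2]
        have hlaw := gw_law hmeas hindep hident
          (fun p : ℕ × ℕ => ((ℓ + p.1, c p.1 + p.2) : ℕ × ℕ)) hinj K (fun n => (n : ℝ) < β)
        calc μ Fc = μ {ω | ((gw (fun p => ξ p.1 p.2 ω) K : ℕ) : ℝ) < β} := hlaw
          _ ≤ r := hb
      calc μ ((G ∩ F t) ∩ D v) = μ ((G0 ∩ D v) ∩ Fc) := by rw [hsetEq]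
        _ = μ (G0 ∩ D v) * μ Fc := hprod
        _ ≤ μ (G0 ∩ D v) * r := mul_le_mul_right hFcB _
        _ = r * μ (G ∩ D v) := by rw [hGD, mul_comm]
    · -- bad trajectory
      push_neg at hgood
      obtain ⟨u, hu⟩ := hgood
      have hempty : G ∩ D v = ∅ := by
        ext ω
        simp only [Set.mem_empty_iff_false, iff_false]
        rintro ⟨⟨h0, hF⟩, hD⟩
        have h1 : ((sub (fun p => ξ p.1 p.2 ω) ℓ K (u : ℕ) : ℕ) : ℝ) < β := by
          have := Set.mem_iInter.mp (Set.mem_iInter.mp hF (u : ℕ)) u.isLt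
          exact this
        have h2 := hD u (Fin.last K)
        rw [show ((Fin.last K : Fin (K + 1)) : ℕ) = K from rfl] at h2
        rw [h2] at h1
        exact absurd h1 (not_lt.mpr hu)
      calc μ ((G ∩ F t) ∩ D v) ≤ μ (G ∩ D v) :=
            measure_mono fun ω h => ⟨h.1.1, h.2⟩
        _ = 0 := by rw [hempty]; exact measure_empty
        _ ≤ r * μ (G ∩ D v) := zero_le
  calc μ (G ∩ F t) = ∑' v, μ ((G ∩ F t) ∩ D v) := hpart _ (hGmeas.inter (hFmeas t))
    _ ≤ ∑' v, r * μ (G ∩ D v) := ENNReal.tsum_le_tsum hterm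
    _ = r * ∑' v, μ (G ∩ D v) := ENNReal.tsum_mul_left
    _ = r * μ G := by rw [← hpart G hGmeas]


variable {Ω : Type*} [MeasurableSpace Ω] {μ : Measure Ω} [IsProbabilityMeasure μ]
  {ξ : ℕ → ℕ → Ω → ℕ}

lemma key_step (hmeas : ∀ n i, Measurable (ξ n i))
    (hindep : iIndepFun (fun p : ℕ × ℕ => ξ p.1 p.2) μ)
    (hident : ∀ n i, Measure.map (ξ n i) μ = Measure.map (ξ 0 0) μ)
    (ℓ K j : ℕ) (β : ℝ) (r : ENNReal)
    (hb : μ {ω | ((gw (fun p => ξ p.1 p.2 ω) K : ℕ) : ℝ) < β} ≤ r) (t : ℕ) :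
    μ ({ω | gw (fun p => ξ p.1 p.2 ω) ℓ = j}
        ∩ ⋂ u, ⋂ (_ : u < t), {ω | ((sub (fun p => ξ p.1 p.2 ω) ℓ K u : ℕ) : ℝ) < β})
      ≤ r ^ t * μ {ω | gw (fun p => ξ p.1 p.2 ω) ℓ = j} := by
  induction t with
  | zero =>
    have h0 : (⋂ u, ⋂ (_ : u < 0),
        {ω : Ω | ((sub (fun p => ξ p.1 p.2 ω) ℓ K u : ℕ) : ℝ) < β}) = Set.univ := by
      simp
    rw [h0, Set.inter_univ, pow_zero, one_mul]
  | succ t ih =>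
    have hsplit : (⋂ u, ⋂ (_ : u < t + 1),
        {ω : Ω | ((sub (fun p => ξ p.1 p.2 ω) ℓ K u : ℕ) : ℝ) < β})
        = (⋂ u, ⋂ (_ : u < t), {ω : Ω | ((sub (fun p => ξ p.1 p.2 ω) ℓ K u : ℕ) : ℝ) < β})
          ∩ {ω : Ω | ((sub (fun p => ξ p.1 p.2 ω) ℓ K t : ℕ) : ℝ) < β} := by
      ext ω
      simp only [Set.mem_iInter, Set.mem_inter_iff, Set.mem_setOf_eq]
      constructor
      · intro h
        exact ⟨fun u hu => h u (hu.trans (Nat.lt_succ_self t)), h t (Nat.lt_succ_self t)⟩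
      · rintro ⟨h1, h2⟩ u hu
        rcases Nat.lt_succ_iff_lt_or_eq.mp hu with h | rfl
        · exact h1 u h
        · exact h2
    rw [hsplit, ← Set.inter_assoc]
    calc μ (({ω | gw (fun p => ξ p.1 p.2 ω) ℓ = j}
            ∩ ⋂ u, ⋂ (_ : u < t), {ω | ((sub (fun p => ξ p.1 p.2 ω) ℓ K u : ℕ) : ℝ) < β})
           ∩ {ω | ((sub (fun p => ξ p.1 p.2 ω) ℓ K t : ℕ) : ℝ) < β})
        ≤ r * μ ({ω | gw (fun p => ξ p.1 p.2 ω) ℓ = j}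
            ∩ ⋂ u, ⋂ (_ : u < t), {ω | ((sub (fun p => ξ p.1 p.2 ω) ℓ K u : ℕ) : ℝ) < β}) :=
          one_subtree_step hmeas hindep hident ℓ K t j β r hb
      _ ≤ r * (r ^ t * μ {ω | gw (fun p => ξ p.1 p.2 ω) ℓ = j}) := mul_le_mul_right ih _
      _ = r ^ (t + 1) * μ {ω | gw (fun p => ξ p.1 p.2 ω) ℓ = j} := by
          rw [pow_succ]; ring


end Stmt9

end Stmt9Aux

open Stmt9

/-- Let `Z` be a supercritical Galton–Watson process with `Z₀ = 1`,
offspring mean `δ ∈ (1,∞)` and extinction probability `q < 1`. If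
`P(Z_r ≥ α δ^r for all r) ≥ (1 − q)/2` for some `α > 0`, then for `ℓ < k`,
`P(Z_k < α δ^{k−ℓ} | Z_ℓ) ≤ ((1 + q)/2)^{Z_ℓ}` a.s.; equivalently, for every `j`,
`μ({Z_k < α δ^{k−ℓ}} ∩ {Z_ℓ = j}) ≤ ((1 + q)/2)^j · μ{Z_ℓ = j}`. -/
theorem stmt9 {Ω : Type*} [MeasurableSpace Ω] (μ : Measure Ω) [IsProbabilityMeasure μ]
    (ξ : ℕ → ℕ → Ω → ℕ) (Z : ℕ → Ω → ℕ)
    (hmeas : ∀ n i, Measurable (ξ n i))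
    (hindep : iIndepFun (fun p : ℕ × ℕ => ξ p.1 p.2) μ)
    (hident : ∀ n i, Measure.map (ξ n i) μ = Measure.map (ξ 0 0) μ)
    (hZ0 : ∀ ω, Z 0 ω = 1)
    (hZrec : ∀ n ω, Z (n + 1) ω = ∑ i ∈ Finset.range (Z n ω), ξ n i ω)
    (δ : ℝ) (hδ : 1 < δ)
    (hint : Integrable (fun ω => (ξ 0 0 ω : ℝ)) μ)
    (hmean : ∫ ω, (ξ 0 0 ω : ℝ) ∂μ = δ)
    (q : ℝ) (hqdef : q = (μ {ω | ∃ n, Z n ω = 0}).toReal) (hq1 : q < 1)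
    (α : ℝ) (hα : 0 < α)
    (hαbound : ENNReal.ofReal ((1 - q) / 2)
      ≤ μ {ω | ∀ r : ℕ, α * δ ^ r ≤ (Z r ω : ℝ)})
    (ℓ k : ℕ) (hlk : ℓ < k) (j : ℕ) :
    μ ({ω | (Z k ω : ℝ) < α * δ ^ (k - ℓ)} ∩ {ω | Z ℓ ω = j})
      ≤ ENNReal.ofReal (((1 + q) / 2) ^ j) * μ {ω | Z ℓ ω = j} := by

  have hq0 : 0 ≤ q := by rw [hqdef]; exact ENNReal.toReal_nonneg
  have hhalf1 : (0 : ℝ) ≤ (1 - q) / 2 := by linarith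
  have hhalf2 : (0 : ℝ) ≤ (1 + q) / 2 := by linarith
  set K := k - ℓ with hK_def
  have hkK : k = ℓ + K := by omega
  set β := α * δ ^ K with hβ_def
  have hZgw : ∀ n ω, Z n ω = gw (fun p => ξ p.1 p.2 ω) n := by
    intro n
    induction n with
    | zero => intro ω; exact hZ0 ω
    | succ n ih =>
      intro ω
      rw [hZrec n ω, ih ω]
      rfl
  have hxm : Measurable (fun ω (p : ℕ × ℕ) => ξ p.1 p.2 ω) :=
    measurable_pi_lambda _ fun p => hmeas p.1 p.2
  have hgwm : ∀ n, Measurable (fun ω => gw (fun p => ξ p.1 p.2 ω) n) :=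
    fun n => (measurable_gw n).comp hxm
  -- probability bound for a fresh copy of the process
  have hb : μ {ω | ((gw (fun p => ξ p.1 p.2 ω) K : ℕ) : ℝ) < β}
      ≤ ENNReal.ofReal ((1 + q) / 2) := by
    have hset : {ω | ((gw (fun p => ξ p.1 p.2 ω) K : ℕ) : ℝ) < β}
        = {ω | β ≤ ((Z K ω : ℕ) : ℝ)}ᶜ := by
      ext ω
      simp [hZgw K ω, not_le]
    have hSKmeas : MeasurableSet {ω | β ≤ ((Z K ω : ℕ) : ℝ)} := by
      have heq : {ω | β ≤ ((Z K ω : ℕ) : ℝ)}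
          = (fun ω => gw (fun p => ξ p.1 p.2 ω) K) ⁻¹' {n : ℕ | β ≤ (n : ℝ)} := by
        ext ω; simp [hZgw K ω]
      rw [heq]
      exact hgwm K ((Set.to_countable _).measurableSet)
    rw [hset, prob_compl_eq_one_sub hSKmeas]
    have hge : ENNReal.ofReal ((1 - q) / 2) ≤ μ {ω | β ≤ ((Z K ω : ℕ) : ℝ)} :=
      le_trans hαbound (measure_mono fun ω h => h K)
    calc 1 - μ {ω | β ≤ ((Z K ω : ℕ) : ℝ)}
        ≤ 1 - ENNReal.ofReal ((1 - q) / 2) := tsub_le_tsub_left hge 1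
      _ ≤ ENNReal.ofReal ((1 + q) / 2) := by
          have hsum : ENNReal.ofReal ((1 + q) / 2) + ENNReal.ofReal ((1 - q) / 2) = 1 := by
            rw [← ENNReal.ofReal_add hhalf2 hhalf1]
            have : (1 + q) / 2 + (1 - q) / 2 = 1 := by ring
            rw [this, ENNReal.ofReal_one]
          exact tsub_le_iff_right.mpr (le_of_eq hsum.symm)
  have hkey := key_step hmeas hindep hident ℓ K j β (ENNReal.ofReal ((1 + q) / 2)) hb j
  have hsubset : {ω | (Z k ω : ℝ) < β} ∩ {ω | Z ℓ ω = j}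
      ⊆ {ω | gw (fun p => ξ p.1 p.2 ω) ℓ = j}
        ∩ ⋂ u, ⋂ (_ : u < j), {ω | ((sub (fun p => ξ p.1 p.2 ω) ℓ K u : ℕ) : ℝ) < β} := by
    rintro ω ⟨h1, h2⟩
    refine ⟨?_, ?_⟩
    · show gw (fun p => ξ p.1 p.2 ω) ℓ = j
      rw [← hZgw ℓ ω]
      exact h2
    refine Set.mem_iInter.mpr fun u => Set.mem_iInter.mpr fun hu => ?_
    show ((sub (fun p => ξ p.1 p.2 ω) ℓ K u : ℕ) : ℝ) < β
    have hsum := subtree_sum Z hZrec ℓ j ω h2 K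
    have hle : sub (fun p => ξ p.1 p.2 ω) ℓ K u ≤ Z (ℓ + K) ω := by
      rw [← hsum]
      exact Finset.single_le_sum (fun _ _ => Nat.zero_le _) (Finset.mem_range.mpr hu)
    calc ((sub (fun p => ξ p.1 p.2 ω) ℓ K u : ℕ) : ℝ)
        ≤ ((Z (ℓ + K) ω : ℕ) : ℝ) := Nat.cast_le.mpr hle
      _ = ((Z k ω : ℕ) : ℝ) := by rw [← hkK]
      _ < β := h1
  have hGZ : {ω | gw (fun p => ξ p.1 p.2 ω) ℓ = j} = {ω | Z ℓ ω = j} := by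
    ext ω; rw [Set.mem_setOf_eq, Set.mem_setOf_eq, ← hZgw ℓ ω]
  calc μ ({ω | (Z k ω : ℝ) < β} ∩ {ω | Z ℓ ω = j})
      ≤ μ ({ω | gw (fun p => ξ p.1 p.2 ω) ℓ = j}
          ∩ ⋂ u, ⋂ (_ : u < j), {ω | ((sub (fun p => ξ p.1 p.2 ω) ℓ K u : ℕ) : ℝ) < β}) :=
        measure_mono hsubset
    _ ≤ (ENNReal.ofReal ((1 + q) / 2)) ^ j * μ {ω | gw (fun p => ξ p.1 p.2 ω) ℓ = j} := hkey
    _ = ENNReal.ofReal (((1 + q) / 2) ^ j) * μ {ω | Z ℓ ω = j} := by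
        rw [← ENNReal.ofReal_pow hhalf2, hGZ]
end

section
/- Let q ∈ [0,1) be the extinction probability (smallest fixed point of the offspring generating function f of a Galton–Watson process with mean δ ∈ (1,∞)), and for K > 0 let q̃(K) be the smallest fixed point in [0,1) of the generating function f̃_K(x) = f(1 − F(K) + F(K)x), where F is a distribution function with F(K) → 1 as K → ∞ and δ F(K₀) > 1 for some K₀. Then q̃(K) → q as K → ∞. -/
open Filter Set

/-- IVT helper: a continuous map on `[0,b]` with `0 ≤ g 0` and `g b ≤ b` has a fixed
point in `[0,b]`. -/
lemma ivt_fix_aux (g : ℝ → ℝ) (b : ℝ) (hb : 0 ≤ b) (hc : ContinuousOn g (Set.Icc 0 b))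
    (h0 : 0 ≤ g 0) (h1 : g b ≤ b) : ∃ c, 0 ≤ c ∧ c ≤ b ∧ g c = c := by
  have hcont : ContinuousOn (fun x => g x - x) (Set.Icc 0 b) := hc.sub continuousOn_id
  have hsub := intermediate_value_Icc' hb hcont
  have hb' : g b - b ≤ (0:ℝ) := by linarith
  have h0' : (0:ℝ) ≤ g 0 - 0 := by linarith
  obtain ⟨c, hcmem, hceq⟩ := hsub ⟨hb', h0'⟩
  have hceq' : g c - c = 0 := hceq
  exact ⟨c, hcmem.1, hcmem.2, by linarith⟩

/-- Let `q ∈ [0,1)` be the smallest fixed point of the offspring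
generating function `f` of a Galton–Watson process with mean `δ ∈ (1,∞)`, and for `K`
let `q̃(K)` be the smallest fixed point in `[0,1)` of the thinned generating function
`f̃_K(x) = f(1 − F(K) + F(K)x)`, where `F` is a distribution function with `F(K) → 1` as
`K → ∞` and `δ F(K₀) > 1` for some `K₀`. Then `q̃(K) → q` as `K → ∞`. -/
theorem stmt17 (p : ℕ → ℝ) (hp : ∀ n, 0 ≤ p n) (hsum : ∑' n, p n = 1)
    (δ : ℝ) (hsummean : Summable fun n : ℕ => (n : ℝ) * p n)
    (hmean : ∑' n : ℕ, (n : ℝ) * p n = δ) (hδ : 1 < δ)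
    (f : ℝ → ℝ) (hf : ∀ z, f z = ∑' n : ℕ, p n * z ^ n)
    (q : ℝ) (hq : IsLeast {x | x ∈ Set.Ico (0:ℝ) 1 ∧ f x = x} q)
    (F : ℝ → ℝ) (hFmono : Monotone F) (hF0 : ∀ x, 0 ≤ F x) (hF1 : ∀ x, F x ≤ 1)
    (hFlim : Filter.Tendsto F Filter.atTop (nhds 1))
    (K₀ : ℝ) (hK₀ : 1 < δ * F K₀)
    (qt : ℝ → ℝ)
    (hqt : ∀ K, K₀ ≤ K →
      IsLeast {x | x ∈ Set.Ico (0:ℝ) 1 ∧ f (1 - F K + F K * x) = x} (qt K)) :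
    Filter.Tendsto qt Filter.atTop (nhds q) := by
  obtain ⟨⟨⟨hq0, hq1⟩, hfq⟩, hqlb⟩ := hq
  -- summability facts
  have hsp : Summable p := by
    by_contra h
    rw [tsum_eq_zero_of_not_summable h] at hsum
    norm_num at hsum
  have hsx : ∀ x : ℝ, 0 ≤ x → x ≤ 1 → Summable (fun n => p n * x ^ n) := by
    intro x hx0 hx1
    refine hsp.of_nonneg_of_le (fun n => mul_nonneg (hp n) (pow_nonneg hx0 n)) (fun n => ?_)
    have hxn : x ^ n ≤ 1 := pow_le_one₀ hx0 hx1
    nlinarith [hp n, pow_nonneg hx0 n]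
  have hf1 : f 1 = 1 := by rw [hf]; simpa using hsum
  have hfmono : ∀ a b : ℝ, 0 ≤ a → a ≤ b → b ≤ 1 → f a ≤ f b := by
    intro a b ha hab hb1
    rw [hf, hf]
    exact Summable.tsum_le_tsum
      (fun n => mul_le_mul_of_nonneg_left (pow_le_pow_left₀ ha hab n) (hp n))
      (hsx a ha (hab.trans hb1)) (hsx b (ha.trans hab) hb1)
  have hf0 : ∀ x : ℝ, 0 ≤ x → 0 ≤ f x := by
    intro x hx; rw [hf]; exact tsum_nonneg fun n => mul_nonneg (hp n) (pow_nonneg hx n)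
  have hfcont : ContinuousOn f (Icc (0:ℝ) 1) := by
    have hfe : f = fun x : ℝ => ∑' n, p n * x ^ n := funext hf
    rw [hfe, continuousOn_iff_continuous_restrict]
    refine continuous_tsum (fun n => (continuous_const.mul (continuous_subtype_val.pow n)))
      hsp (fun n x => ?_)
    have hx0 : (0:ℝ) ≤ x := x.2.1
    have hx1 : (x:ℝ) ≤ 1 := x.2.2
    have hxn : (x:ℝ) ^ n ≤ 1 := pow_le_one₀ hx0 hx1
    have habs : |p n * (x:ℝ) ^ n| = p n * (x:ℝ) ^ n :=
      abs_of_nonneg (mul_nonneg (hp n) (pow_nonneg hx0 n))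
    rw [Real.norm_eq_abs, habs]
    nlinarith [hp n, pow_nonneg hx0 n]
  -- convexity on [0,1]
  have hconv : ∀ a b t : ℝ, 0 ≤ a → a ≤ 1 → 0 ≤ b → b ≤ 1 → 0 ≤ t → t ≤ 1 →
      f (t * a + (1 - t) * b) ≤ t * f a + (1 - t) * f b := by
    intro a b t ha0 ha1 hb0 hb1 ht0 ht1
    have hm0 : 0 ≤ t * a + (1 - t) * b := by nlinarith
    have hm1 : t * a + (1 - t) * b ≤ 1 := by nlinarith
    rw [hf, hf, hf]
    have key : ∀ n : ℕ, p n * (t * a + (1 - t) * b) ^ n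
        ≤ t * (p n * a ^ n) + (1 - t) * (p n * b ^ n) := by
      intro n
      have hcx := (convexOn_pow n).2 (Set.mem_Ici.2 ha0) (Set.mem_Ici.2 hb0) ht0
        (show (0:ℝ) ≤ 1 - t by linarith) (show t + (1 - t) = 1 by ring)
      simp only [smul_eq_mul] at hcx
      nlinarith [hp n]
    have hsa := (hsx a ha0 ha1).mul_left t
    have hsb := (hsx b hb0 hb1).mul_left (1 - t)
    calc ∑' n, p n * (t * a + (1 - t) * b) ^ n
        ≤ ∑' n, (t * (p n * a ^ n) + (1 - t) * (p n * b ^ n)) :=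
          Summable.tsum_le_tsum key (hsx _ hm0 hm1) (hsa.add hsb)
      _ = t * ∑' n, p n * a ^ n + (1 - t) * ∑' n, p n * b ^ n := by
          rw [Summable.tsum_add hsa hsb, tsum_mul_left, tsum_mul_left]
  -- a point x₁ ∈ (q,1) with f x₁ < x₁
  obtain ⟨N, hN⟩ : ∃ N : ℕ, 1 < ∑ n ∈ Finset.range N, (n : ℝ) * p n := by
    have ht := hsummean.hasSum.tendsto_sum_nat
    rw [hmean] at ht
    exact (ht.eventually (eventually_gt_nhds hδ)).exists
  set g1 : ℝ → ℝ := fun x => ∑ n ∈ Finset.range N, p n * ∑ i ∈ Finset.range n, x ^ i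
    with hg1
  have hg1cont : Continuous g1 := by
    apply continuous_finset_sum
    exact fun n _ => continuous_const.mul (continuous_finset_sum _ fun i _ => continuous_pow i)
  have hg11 : g1 1 = ∑ n ∈ Finset.range N, (n : ℝ) * p n := by
    simp [hg1, mul_comm]
  have hkey : ∀ x : ℝ, 0 ≤ x → x ≤ 1 → (1 - x) * g1 x ≤ 1 - f x := by
    intro x hx0 hx1
    have hsub : Summable (fun n => p n * (1 - x ^ n)) := by
      have h := hsp.sub (hsx x hx0 hx1)
      exact h.congr fun n => by ring
    have h1 : ∑' n, p n * (1 - x ^ n) = 1 - f x :=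
      calc ∑' n, p n * (1 - x ^ n) = ∑' n, (p n - p n * x ^ n) := by
            congr 1; funext n; ring
        _ = (∑' n, p n) - ∑' n, p n * x ^ n := Summable.tsum_sub hsp (hsx x hx0 hx1)
        _ = 1 - f x := by rw [hsum, hf]
    have h2 : (1 - x) * g1 x = ∑ n ∈ Finset.range N, p n * (1 - x ^ n) := by
      rw [hg1, Finset.mul_sum]
      refine Finset.sum_congr rfl fun n _ => ?_
      linear_combination (-p n) * geom_sum_mul x n
    rw [← h1, h2]
    refine Summable.sum_le_tsum _ (fun n _ => ?_) hsub
    have hxn : x ^ n ≤ 1 := pow_le_one₀ hx0 hx1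
    exact mul_nonneg (hp n) (by linarith)
  obtain ⟨x₁, hqx₁, hx₁1, hfx₁⟩ : ∃ x₁ : ℝ, q < x₁ ∧ x₁ < 1 ∧ f x₁ < x₁ := by
    have hev : ∀ᶠ x in nhds (1:ℝ), 1 < g1 x :=
      hg1cont.continuousAt.eventually (eventually_gt_nhds (by rw [hg11]; exact hN))
    rw [Metric.eventually_nhds_iff] at hev
    obtain ⟨ε, hε, hball⟩ := hev
    refine ⟨max ((1 + q) / 2) (1 - ε / 2), ?_, ?_, ?_⟩
    · exact lt_of_lt_of_le (by linarith) (le_max_left _ _)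
    · exact max_lt (by linarith) (by linarith)
    · set x₁ := max ((1 + q) / 2) (1 - ε / 2) with hx₁def
      have hx₁0 : 0 ≤ x₁ := le_trans (by linarith) (le_max_left _ _)
      have hx₁lt1 : x₁ < 1 := max_lt (by linarith) (by linarith)
      have hx₁ge : 1 - ε / 2 ≤ x₁ := le_max_right _ _
      have hdist : dist x₁ 1 < ε := by
        rw [Real.dist_eq, abs_of_nonpos (by linarith)]
        linarith
      have hg1x : 1 < g1 x₁ := hball hdist
      have hkx := hkey x₁ hx₁0 hx₁lt1.le
      nlinarith
  -- strict inequality on (q, x₁]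
  have hstrict : ∀ y : ℝ, q < y → y ≤ x₁ → f y < y := by
    intro y hqy hyx
    have hx1q : 0 < x₁ - q := by linarith
    set t : ℝ := (x₁ - y) / (x₁ - q) with ht
    have ht0 : 0 ≤ t := div_nonneg (by linarith) hx1q.le
    have ht1 : t < 1 := by rw [div_lt_one hx1q]; linarith
    have hyeq : y = t * q + (1 - t) * x₁ := by
      rw [ht]
      linear_combination div_mul_cancel₀ (x₁ - y) hx1q.ne'
    have hc := hconv q x₁ t hq0 hq1.le (by linarith) hx₁1.le ht0 ht1.le
    rw [← hyeq] at hc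
    nlinarith [mul_pos (by linarith : (0:ℝ) < 1 - t) (by linarith : (0:ℝ) < x₁ - f x₁)]
  -- lower bound
  have hlb : ∀ K, K₀ ≤ K → q ≤ qt K := by
    intro K hK
    obtain ⟨⟨⟨hs0, hs1⟩, hsfix⟩, _⟩ := hqt K hK
    have hFK0 := hF0 K; have hFK1 := hF1 K
    have harg1 : 1 - F K + F K * qt K ≤ 1 := by nlinarith
    have hsarg : qt K ≤ 1 - F K + F K * qt K := by nlinarith
    have hfs : f (qt K) ≤ qt K :=
      le_of_le_of_eq (hfmono (qt K) _ hs0 hsarg harg1) hsfix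
    obtain ⟨c, hc0, hcs, hcfix⟩ := ivt_fix_aux f (qt K) hs0
      (hfcont.mono (Icc_subset_Icc le_rfl hs1.le)) (hf0 0 le_rfl) hfs
    exact le_trans (hqlb ⟨⟨hc0, lt_of_le_of_lt hcs hs1⟩, hcfix⟩) hcs
  -- upper bound eventually
  have hub : ∀ ε : ℝ, 0 < ε → ∀ᶠ K in atTop, qt K < q + ε := by
    intro ε hε
    set y := min x₁ (q + ε / 2) with hy
    have hqy : q < y := lt_min hqx₁ (by linarith)
    have hyx₁ : y ≤ x₁ := min_le_left _ _
    have hy1 : y < 1 := lt_of_le_of_lt hyx₁ hx₁1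
    have hy0 : 0 ≤ y := le_trans hq0 hqy.le
    have hfy : f y < y := hstrict y hqy hyx₁
    have hargt : Tendsto (fun K => 1 - F K + F K * y) atTop (nhds y) := by
      have h : Tendsto (fun K => 1 - F K + F K * y) atTop (nhds (1 - 1 + 1 * y)) :=
        (tendsto_const_nhds.sub hFlim).add (hFlim.mul tendsto_const_nhds)
      simpa using h
    have hargmem : ∀ K, (1 - F K + F K * y) ∈ Icc (0:ℝ) 1 := by
      intro K
      have h0 := hF0 K; have h1 := hF1 K
      have h2 : F K * y ≤ F K * 1 := mul_le_mul_of_nonneg_left hy1.le h0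
      have h3 : 0 ≤ F K * y := mul_nonneg h0 hy0
      exact ⟨by linarith, by linarith⟩
    have hft : Tendsto (fun K => f (1 - F K + F K * y)) atTop (nhds (f y)) := by
      have hcw : ContinuousWithinAt f (Icc (0:ℝ) 1) y := hfcont y ⟨hy0, hy1.le⟩
      exact hcw.tendsto.comp
        (tendsto_nhdsWithin_iff.2 ⟨hargt, Filter.Eventually.of_forall hargmem⟩)
    have hev : ∀ᶠ K in atTop, f (1 - F K + F K * y) < y :=
      hft.eventually (eventually_lt_nhds hfy)
    filter_upwards [hev, eventually_ge_atTop K₀] with K hK1 hK2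
    have hFK0 := hF0 K; have hFK1 := hF1 K
    have hmaps : Set.MapsTo (fun x => 1 - F K + F K * x) (Icc 0 y) (Icc (0:ℝ) 1) := by
      rintro x ⟨hx0, hxy⟩
      simp only [Set.mem_Icc]
      have h2 : F K * x ≤ F K * 1 := mul_le_mul_of_nonneg_left (by linarith) hFK0
      have h3 : 0 ≤ F K * x := mul_nonneg hFK0 hx0
      exact ⟨by linarith, by linarith⟩
    have hg2cont : ContinuousOn (fun x => f (1 - F K + F K * x)) (Icc 0 y) :=
      hfcont.comp ((continuous_const.add (continuous_const.mul continuous_id)).continuousOn) hmaps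
    have hg20 : 0 ≤ f (1 - F K + F K * 0) := hf0 _ (by nlinarith)
    obtain ⟨c, hc0, hcy, hcfix⟩ := ivt_fix_aux (fun x => f (1 - F K + F K * x)) y hy0
      hg2cont hg20 hK1.le
    have hle : qt K ≤ c := (hqt K hK2).2 ⟨⟨hc0, lt_of_le_of_lt hcy hy1⟩, hcfix⟩
    have hyle : y ≤ q + ε / 2 := min_le_right _ _
    linarith
  rw [tendsto_order]
  constructor
  · intro a ha
    filter_upwards [eventually_ge_atTop K₀] with K hK
    exact lt_of_lt_of_le ha (hlb K hK)
  · intro a ha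
    filter_upwards [hub (a - q) (by linarith)] with K hK
    linarith
end
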